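/- Assume β ∈ [0,1] and M > 6. There exist constants c, C > 0 (depending only on β and M) such that for all ω₁ > 1 one has c · ω₁^{2β − 1/2 − M/2} ≤ C²³⁴[n⁰¹, n⁰¹, n⁰¹](ω₁) ≤ C · ω₁^{2β − 1/2 − M/2}. -/

import Mathlib

open MeasureTheory Real
open scoped ENNReal

noncomputable section

/-- Japanese bracket ⟨ω⟩ = (1 + ω²)^{1/2}. -/
def jb (ω : ℝ) : ℝ := Real.sqrt (1 + ω ^ 2)

/-- n⁰¹(ω) = ⟨ω⟩^{-M/2}. -/
def n01 (M : ℝ) (ω : ℝ) : ℝ := jb ω ^ (-(M / 2))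

/-- The operator C₂₁²³⁴, with ω₂ = ω₃ + ω₄ − ω₁. -/
def C21op (β : ℝ) (k l m : ℝ → ℝ) (ω₁ : ℝ) : ℝ :=
  64 * π ^ 3 * ω₁ ^ (β - 1/2) *
    ∫ ω₃ in (0:ℝ)..(ω₁ / 2), ∫ ω₄ in (ω₁ - ω₃)..ω₁,
      (ω₃ + ω₄ - ω₁) ^ (β + 1/2) * ω₃ ^ β * ω₄ ^ β *
        (k (ω₃ + ω₄ - ω₁) * l ω₃ * m ω₄)

/-- The operator C₂₂²³⁴, with ω₂ = ω₃ + ω₄ − ω₁. -/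
def C22op (β : ℝ) (k l m : ℝ → ℝ) (ω₁ : ℝ) : ℝ :=
  64 * π ^ 3 * ω₁ ^ (β - 1/2) *
    ∫ ω₃ in (ω₁ / 2)..ω₁, ∫ ω₄ in ω₃..ω₁,
      (ω₃ + ω₄ - ω₁) ^ (β + 1/2) * ω₃ ^ β * ω₄ ^ β *
        (k (ω₃ + ω₄ - ω₁) * l ω₃ * m ω₄)

/-- The operator C₃²³⁴, with ω₂ = ω₃ + ω₄ − ω₁. -/
def C3op (β : ℝ) (k l m : ℝ → ℝ) (ω₁ : ℝ) : ℝ :=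
  64 * π ^ 3 * ω₁ ^ (β - 1/2) *
    ∫ ω₃ in (0:ℝ)..ω₁, ∫ ω₄ in Set.Ioi ω₁,
      (ω₃ + ω₄ - ω₁) ^ β * ω₃ ^ (β + 1/2) * ω₄ ^ β *
        (k (ω₃ + ω₄ - ω₁) * l ω₃ * m ω₄)

/-- The operator C₁²³⁴, with ω₂ = ω₃ + ω₄ − ω₁. -/
def C1op (β : ℝ) (k l m : ℝ → ℝ) (ω₁ : ℝ) : ℝ :=
  64 * π ^ 3 * ω₁ ^ β *
    ∫ ω₃ in Set.Ioi ω₁, ∫ ω₄ in Set.Ioi ω₃,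
      (ω₃ + ω₄ - ω₁) ^ β * ω₃ ^ β * ω₄ ^ β *
        (k (ω₃ + ω₄ - ω₁) * l ω₃ * m ω₄)

/-- The full domain of integration {0 ≤ ω₃ ≤ ω₄, ω₃ + ω₄ ≥ ω₁} ⊂ ℝ². -/
def Dom (ω₁ : ℝ) : Set (ℝ × ℝ) := {p | 0 ≤ p.1 ∧ p.1 ≤ p.2 ∧ ω₁ ≤ p.1 + p.2}

/-- The cross-section factor min{√ω₁, √ω₂, √ω₃}, with ω₂ = ω₃ + ω₄ − ω₁,
where p = (ω₃, ω₄). -/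
def crossMin (ω₁ : ℝ) (p : ℝ × ℝ) : ℝ :=
  min (Real.sqrt ω₁) (min (Real.sqrt (p.1 + p.2 - ω₁)) (Real.sqrt p.1))

/-- The operator C^{j₁j₂j₃}[k,l,m](ω₁) where the factor is k(ω_{j₁}) l(ω_{j₂}) m(ω_{j₃}),
with ω₂ = ω₃ + ω₄ − ω₁ and p = (ω₃, ω₄); here the selection of frequencies is passed
as a function `sel : (ℝ × ℝ) → ℝ × ℝ × ℝ` giving (ω_{j₁}, ω_{j₂}, ω_{j₃}). -/
def Cfull (β : ℝ) (k l m : ℝ → ℝ) (sel : ℝ → ℝ × ℝ → ℝ × ℝ × ℝ) (ω₁ : ℝ) : ℝ :=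
  64 * π ^ 3 * ω₁ ^ (β - 1/2) *
    ∫ p in Dom ω₁,
      ((p.1 + p.2 - ω₁) * p.1 * p.2) ^ β * crossMin ω₁ p *
        (k (sel ω₁ p).1 * l (sel ω₁ p).2.1 * m (sel ω₁ p).2.2)

/-- C²³⁴[k,l,m](ω₁): integrand k(ω₂) l(ω₃) m(ω₄). -/
def C234 (β : ℝ) (k l m : ℝ → ℝ) : ℝ → ℝ :=
  Cfull β k l m (fun ω₁ p => (p.1 + p.2 - ω₁, p.1, p.2))

/-- C¹²⁴[k,l,m](ω₁): integrand k(ω₁) l(ω₂) m(ω₄). -/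
def C124 (β : ℝ) (k l m : ℝ → ℝ) : ℝ → ℝ :=
  Cfull β k l m (fun ω₁ p => (ω₁, p.1 + p.2 - ω₁, p.2))

/-- C¹³⁴[k,l,m](ω₁): integrand k(ω₁) l(ω₃) m(ω₄). -/
def C134 (β : ℝ) (k l m : ℝ → ℝ) : ℝ → ℝ :=
  Cfull β k l m (fun ω₁ p => (ω₁, p.1, p.2))

/-- C¹²³[k,l,m](ω₁): integrand k(ω₁) l(ω₂) m(ω₃). -/
def C123 (β : ℝ) (k l m : ℝ → ℝ) : ℝ → ℝ :=
  Cfull β k l m (fun ω₁ p => (ω₁, p.1 + p.2 - ω₁, p.1))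

lemma jb_pos (ω : ℝ) : 0 < jb ω := Real.sqrt_pos.2 (by positivity)

lemma le_jb (ω : ℝ) : ω ≤ jb ω := by
  have h2 : |ω| = Real.sqrt (ω ^ 2) := (Real.sqrt_sq_eq_abs ω).symm
  have h3 : Real.sqrt (ω ^ 2) ≤ Real.sqrt (1 + ω ^ 2) := Real.sqrt_le_sqrt (by linarith)
  calc ω ≤ |ω| := le_abs_self ω
    _ = Real.sqrt (ω ^ 2) := h2
    _ ≤ jb ω := h3

lemma continuous_jb : Continuous jb :=
  Real.continuous_sqrt.comp (by continuity)

lemma continuous_n01 (M : ℝ) : Continuous (n01 M) :=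
  continuous_jb.rpow_const fun x => Or.inl (jb_pos x).ne'

lemma n01_pos (M ω : ℝ) : 0 < n01 M ω := Real.rpow_pos_of_pos (jb_pos ω) _

lemma min_sqrt_le {a b : ℝ} (ha : 0 ≤ a) (hb : 0 ≤ b) :
    min (Real.sqrt a) (Real.sqrt b) ≤ a ^ ((4:ℝ)⁻¹) * b ^ ((4:ℝ)⁻¹) := by
  have key : ∀ u v : ℝ, 0 ≤ u → 0 ≤ v → u ≤ v →
      min (Real.sqrt u) (Real.sqrt v) ≤ u ^ ((4:ℝ)⁻¹) * v ^ ((4:ℝ)⁻¹) := by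
    intro u v hu hv huv
    calc min (Real.sqrt u) (Real.sqrt v) ≤ Real.sqrt u := min_le_left _ _
      _ = u ^ ((2:ℝ)⁻¹) := by rw [Real.sqrt_eq_rpow]; norm_num
      _ = u ^ ((4:ℝ)⁻¹) * u ^ ((4:ℝ)⁻¹) := by
          rw [← Real.rpow_add' hu (by norm_num)]; norm_num
      _ ≤ u ^ ((4:ℝ)⁻¹) * v ^ ((4:ℝ)⁻¹) := by
          have := Real.rpow_le_rpow hu huv (by norm_num : (0:ℝ) ≤ (4:ℝ)⁻¹)
          exact mul_le_mul_of_nonneg_left this (Real.rpow_nonneg hu _)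
  rcases le_total a b with h | h
  · exact key a b ha hb h
  · rw [min_comm, mul_comm]; exact key b a hb ha h

lemma lintegral_jb_rpow_lt_top {r : ℝ} (hr : 1 < r) :
    ∫⁻ ω : ℝ, ENNReal.ofReal (jb ω ^ (-r)) < ⊤ := by
  have hint : Integrable (fun ω : ℝ => Real.sqrt 2 ^ r * (1 + ‖ω‖) ^ (-r)) := by
    refine Integrable.const_mul ?_ _
    exact integrable_one_add_norm (by simpa using hr)
  have hmeas : Continuous (fun ω : ℝ => jb ω ^ (-r)) :=
    continuous_jb.rpow_const fun x => Or.inl (jb_pos x).ne'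
  have hbd : ∀ ω : ℝ, jb ω ^ (-r) ≤ Real.sqrt 2 ^ r * (1 + ‖ω‖) ^ (-r) := by
    intro ω
    have h0 : (0:ℝ) < 1 + ‖ω‖ := by positivity
    have h1 : 1 + ‖ω‖ ≤ Real.sqrt 2 * jb ω := by
      rw [show Real.sqrt 2 * jb ω = Real.sqrt (2 * (1 + ω ^ 2)) by
        rw [jb, ← Real.sqrt_mul (by norm_num)]]
      rw [show (1 + ‖ω‖) = Real.sqrt ((1 + ‖ω‖) ^ 2) from (Real.sqrt_sq (by positivity)).symm]
      apply Real.sqrt_le_sqrt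
      have : ‖ω‖ ^ 2 = ω ^ 2 := by rw [Real.norm_eq_abs, sq_abs]
      nlinarith [sq_nonneg (1 - ‖ω‖)]
    have h2 : (Real.sqrt 2 * jb ω) ^ (-r) ≤ (1 + ‖ω‖) ^ (-r) :=
      Real.rpow_le_rpow_of_nonpos h0 h1 (by linarith)
    have h3 : (Real.sqrt 2 * jb ω) ^ (-r) = Real.sqrt 2 ^ (-r) * jb ω ^ (-r) :=
      Real.mul_rpow (Real.sqrt_nonneg 2) (jb_pos ω).le
    have h4 : (0:ℝ) < Real.sqrt 2 ^ r := Real.rpow_pos_of_pos (by positivity) _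
    have h5 : Real.sqrt 2 ^ (-r) = (Real.sqrt 2 ^ r)⁻¹ := Real.rpow_neg (by positivity) _
    calc jb ω ^ (-r) = Real.sqrt 2 ^ r * (Real.sqrt 2 ^ (-r) * jb ω ^ (-r)) := by
          rw [h5]; field_simp
      _ = Real.sqrt 2 ^ r * (Real.sqrt 2 * jb ω) ^ (-r) := by rw [h3]
      _ ≤ Real.sqrt 2 ^ r * (1 + ‖ω‖) ^ (-r) := mul_le_mul_of_nonneg_left h2 h4.le
  have hInt : Integrable (fun ω : ℝ => jb ω ^ (-r)) := by
    refine hint.mono' hmeas.aestronglyMeasurable ?_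
    filter_upwards with ω
    rw [Real.norm_eq_abs, abs_of_nonneg (Real.rpow_nonneg (jb_pos ω).le _)]
    exact hbd ω
  exact hInt.lintegral_lt_top


set_option maxHeartbeats 1000000 in
/-- Two-sided bound: C²³⁴[n⁰¹,n⁰¹,n⁰¹](ω₁) ≈ ω₁^{2β − 1/2 − M/2} for ω₁ > 1. -/
theorem C234_two_sided_bound (β M : ℝ) (hβ0 : 0 ≤ β) (hβ1 : β ≤ 1) (hM : 6 < M) :
    ∃ c C : ℝ, 0 < c ∧ 0 < C ∧ ∀ ω₁ : ℝ, 1 < ω₁ →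
      c * ω₁ ^ (2 * β - 1/2 - M / 2) ≤ C234 β (n01 M) (n01 M) (n01 M) ω₁ ∧
      C234 β (n01 M) (n01 M) (n01 M) ω₁ ≤ C * ω₁ ^ (2 * β - 1/2 - M / 2) := by
  have hM3 : (3:ℝ) < M / 2 := by linarith
  -- the decay function φ
  set φ : ℝ → ℝ := fun ω => jb ω ^ (β + 4⁻¹ - M / 2) with hφ_def
  have hφ_cont : Continuous φ := continuous_jb.rpow_const fun x => Or.inl (jb_pos x).ne'
  have hφ_nonneg : ∀ ω, 0 ≤ φ ω := fun ω => Real.rpow_nonneg (jb_pos ω).le _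
  set A : ℝ≥0∞ := ∫⁻ ω : ℝ, ENNReal.ofReal (φ ω) with hA_def
  have hA_top : A < ⊤ := by
    have : β + 4⁻¹ - M / 2 = -(M / 2 - β - 4⁻¹) := by ring
    rw [hA_def]
    simp only [hφ_def, this]
    exact lintegral_jb_rpow_lt_top (by linarith)
  -- constants
  set E : ℝ := Real.sqrt 5 ^ (-(M / 2)) with hE_def
  have hE : 0 < E := Real.rpow_pos_of_pos (by positivity) _
  refine ⟨64 * π ^ 3 * (E * E * E / 16), 64 * π ^ 3 * 2 ^ (M / 2 - β) * (A.toReal ^ 2 + 1),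
    by positivity, by positivity, ?_⟩
  intro ω₁ hω
  have hω0 : (0:ℝ) < ω₁ := by linarith
  -- the integrand
  set F : ℝ × ℝ → ℝ := fun p =>
    ((p.1 + p.2 - ω₁) * p.1 * p.2) ^ β * crossMin ω₁ p *
      (n01 M (p.1 + p.2 - ω₁) * n01 M p.1 * n01 M p.2) with hF_def
  have hC234 : C234 β (n01 M) (n01 M) (n01 M) ω₁ =
      64 * π ^ 3 * ω₁ ^ (β - 1/2) * ∫ p in Dom ω₁, F p := rfl
  have hFcont : Continuous F := by
    apply Continuous.mul
    apply Continuous.mul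
    · exact (((continuous_fst.add continuous_snd).sub continuous_const).mul
        continuous_fst |>.mul continuous_snd).rpow_const fun x => Or.inr hβ0
    · exact continuous_const.min
        ((((continuous_fst.add continuous_snd).sub continuous_const).sqrt).min
          continuous_fst.sqrt)
    · exact (((continuous_n01 M).comp
          ((continuous_fst.add continuous_snd).sub continuous_const)).mul
          ((continuous_n01 M).comp continuous_fst)).mul
          ((continuous_n01 M).comp continuous_snd)
  have hDomMeas : MeasurableSet (Dom ω₁) := by
    have hcl : IsClosed (Dom ω₁) := by
      have : Dom ω₁ = {p : ℝ × ℝ | 0 ≤ p.1} ∩ ({p | p.1 ≤ p.2} ∩ {p | ω₁ ≤ p.1 + p.2}) := by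
        ext p; simp only [Dom, Set.mem_setOf_eq, Set.mem_inter_iff]
      rw [this]
      exact (isClosed_le continuous_const continuous_fst).inter
        ((isClosed_le continuous_fst continuous_snd).inter
          (isClosed_le continuous_const (continuous_fst.add continuous_snd)))
    exact hcl.measurableSet
  have hcm_nonneg : ∀ p : ℝ × ℝ, 0 ≤ crossMin ω₁ p := fun p =>
    le_min (Real.sqrt_nonneg _) (le_min (Real.sqrt_nonneg _) (Real.sqrt_nonneg _))
  have hFnn : ∀ p ∈ Dom ω₁, 0 ≤ F p := by
    intro p hp
    obtain ⟨h1, h2, h3⟩ := hp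
    have hbase : 0 ≤ (p.1 + p.2 - ω₁) * p.1 * p.2 :=
      mul_nonneg (mul_nonneg (by linarith) h1) (le_trans h1 h2)
    exact mul_nonneg (mul_nonneg (Real.rpow_nonneg hbase β) (hcm_nonneg p))
      (mul_nonneg (mul_nonneg (n01_pos M _).le (n01_pos M _).le) (n01_pos M _).le)
  set J : ℝ≥0∞ := ∫⁻ p in Dom ω₁, ENNReal.ofReal (F p) with hJ_def
  have hInt_eq : ∫ p in Dom ω₁, F p = J.toReal := by
    rw [hJ_def]
    exact integral_eq_lintegral_of_nonneg_ae
      ((ae_restrict_iff' hDomMeas).mpr (ae_of_all _ hFnn))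
      hFcont.aestronglyMeasurable.restrict
  ----------------------------------------------------------------
  -- UPPER BOUND
  ----------------------------------------------------------------
  set K : ℝ := 2 ^ (M / 2 - β) * ω₁ ^ (β - M / 2) with hK_def
  have hK : 0 < K := by positivity
  set G : ℝ × ℝ → ℝ := fun p => K * (φ (p.1 + p.2 - ω₁) * φ p.1) with hG_def
  have hGcont : Continuous G := continuous_const.mul
    ((hφ_cont.comp ((continuous_fst.add continuous_snd).sub continuous_const)).mul
      (hφ_cont.comp continuous_fst))
  have hFG : ∀ p ∈ Dom ω₁, F p ≤ G p := by
    rintro ⟨x, y⟩ ⟨hx, hxy, hsum⟩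
    simp only at hx hxy hsum ⊢
    set w : ℝ := x + y - ω₁ with hw_def
    have hw : 0 ≤ w := by simp only [hw_def]; linarith
    have hy2 : ω₁ / 2 ≤ y := by linarith
    have hy0 : 0 < y := by linarith
    have hn01 : ∀ u : ℝ, 0 ≤ n01 M u := fun u => (n01_pos M u).le
    have h_split : (w * x * y) ^ β = w ^ β * x ^ β * y ^ β := by
      rw [Real.mul_rpow (mul_nonneg hw hx) hy0.le, Real.mul_rpow hw hx]
    have h_cm : crossMin ω₁ (x, y) ≤ w ^ ((4:ℝ)⁻¹) * x ^ ((4:ℝ)⁻¹) :=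
      le_trans (min_le_right _ _) (min_sqrt_le hw hx)
    have h2 : ∀ u : ℝ, 0 ≤ u → u ^ β * u ^ ((4:ℝ)⁻¹) * n01 M u ≤ φ u := by
      intro u hu
      have e1 : u ^ β * u ^ ((4:ℝ)⁻¹) = u ^ (β + 4⁻¹) :=
        (Real.rpow_add' hu (by positivity)).symm
      have e2 : u ^ (β + 4⁻¹) ≤ jb u ^ (β + 4⁻¹) :=
        Real.rpow_le_rpow hu (le_jb u) (by positivity)
      have e3 : jb u ^ (β + 4⁻¹) * jb u ^ (-(M / 2)) = jb u ^ (β + 4⁻¹ - M / 2) := by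
        rw [← Real.rpow_add (jb_pos u)]; ring_nf
      calc u ^ β * u ^ ((4:ℝ)⁻¹) * n01 M u = u ^ (β + 4⁻¹) * n01 M u := by rw [e1]
        _ ≤ jb u ^ (β + 4⁻¹) * n01 M u :=
            mul_le_mul_of_nonneg_right e2 (n01_pos M u).le
        _ = jb u ^ (β + 4⁻¹ - M / 2) := by rw [n01, e3]
        _ = φ u := rfl
    have h4 : y ^ β * n01 M y ≤ K := by
      have e1 : y ^ β ≤ jb y ^ β := Real.rpow_le_rpow hy0.le (le_jb y) hβ0
      have e2 : jb y ^ β * jb y ^ (-(M / 2)) = jb y ^ (β - M / 2) := by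
        rw [← Real.rpow_add (jb_pos y)]; ring_nf
      have e3 : jb y ^ (β - M / 2) ≤ (ω₁ / 2) ^ (β - M / 2) :=
        Real.rpow_le_rpow_of_nonpos (by linarith) (le_trans hy2 (le_jb y)) (by linarith)
      have e4 : (ω₁ / 2) ^ (β - M / 2) = K := by
        rw [hK_def, Real.div_rpow hω0.le (by norm_num), div_eq_mul_inv,
          ← Real.rpow_neg (by norm_num : (0:ℝ) ≤ 2), mul_comm]
        ring_nf
      calc y ^ β * n01 M y ≤ jb y ^ β * n01 M y :=
            mul_le_mul_of_nonneg_right e1 (n01_pos M y).le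
        _ = jb y ^ (β - M / 2) := by rw [n01, e2]
        _ ≤ (ω₁ / 2) ^ (β - M / 2) := e3
        _ = K := e4
    have hFval : F (x, y) = w ^ β * x ^ β * y ^ β * crossMin ω₁ (x, y) *
        (n01 M w * n01 M x * n01 M y) := by
      rw [hF_def]; simp only; rw [← hw_def, h_split]
    have step1 : F (x, y) ≤ (w ^ β * w ^ ((4:ℝ)⁻¹) * n01 M w) *
        (x ^ β * x ^ ((4:ℝ)⁻¹) * n01 M x) * (y ^ β * n01 M y) := by
      rw [hFval]
      have : w ^ β * x ^ β * y ^ β * crossMin ω₁ (x, y) *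
          (n01 M w * n01 M x * n01 M y) ≤
          w ^ β * x ^ β * y ^ β * (w ^ ((4:ℝ)⁻¹) * x ^ ((4:ℝ)⁻¹)) *
          (n01 M w * n01 M x * n01 M y) := by
        apply mul_le_mul_of_nonneg_right _
          (mul_nonneg (mul_nonneg (hn01 w) (hn01 x)) (hn01 y))
        exact mul_le_mul_of_nonneg_left h_cm
          (mul_nonneg (mul_nonneg (Real.rpow_nonneg hw β) (Real.rpow_nonneg hx β))
            (Real.rpow_nonneg hy0.le β))
      calc _ ≤ w ^ β * x ^ β * y ^ β * (w ^ ((4:ℝ)⁻¹) * x ^ ((4:ℝ)⁻¹)) *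
          (n01 M w * n01 M x * n01 M y) := this
        _ = (w ^ β * w ^ ((4:ℝ)⁻¹) * n01 M w) *
            (x ^ β * x ^ ((4:ℝ)⁻¹) * n01 M x) * (y ^ β * n01 M y) := by ring
    have step2 : (w ^ β * w ^ ((4:ℝ)⁻¹) * n01 M w) *
        (x ^ β * x ^ ((4:ℝ)⁻¹) * n01 M x) * (y ^ β * n01 M y) ≤ φ w * φ x * K := by
      have hg1 := h2 w hw
      have hg2 := h2 x hx
      have nn2 : 0 ≤ x ^ β * x ^ ((4:ℝ)⁻¹) * n01 M x :=
        mul_nonneg (mul_nonneg (Real.rpow_nonneg hx β) (Real.rpow_nonneg hx _)) (hn01 x)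
      have nn3 : 0 ≤ y ^ β * n01 M y :=
        mul_nonneg (Real.rpow_nonneg hy0.le β) (hn01 y)
      exact mul_le_mul (mul_le_mul hg1 hg2 nn2 (hφ_nonneg w)) h4 nn3
        (mul_nonneg (hφ_nonneg w) (hφ_nonneg x))
    calc F (x, y) ≤ _ := step1
      _ ≤ φ w * φ x * K := step2
      _ = G (x, y) := by rw [hG_def]; simp only [← hw_def]; ring
  -- lintegral of G over the plane
  have hGlint : ∫⁻ p : ℝ × ℝ, ENNReal.ofReal (G p) = ENNReal.ofReal K * (A * A) := by
    have hof : ∀ p : ℝ × ℝ, ENNReal.ofReal (G p) =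
        ENNReal.ofReal K * (ENNReal.ofReal (φ (p.1 + p.2 - ω₁)) * ENNReal.ofReal (φ p.1)) := by
      intro p
      rw [hG_def]
      rw [ENNReal.ofReal_mul hK.le, ENNReal.ofReal_mul (hφ_nonneg _)]
    simp only [hof]
    rw [lintegral_const_mul _ (by
      apply Measurable.mul (f := fun p : ℝ × ℝ => ENNReal.ofReal (φ (p.1 + p.2 - ω₁)))
        (g := fun p : ℝ × ℝ => ENNReal.ofReal (φ p.1))
      · exact (ENNReal.measurable_ofReal.comp (hφ_cont.comp
          ((continuous_fst.add continuous_snd).sub continuous_const)).measurable)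
      · exact (ENNReal.measurable_ofReal.comp (hφ_cont.comp continuous_fst).measurable))]
    congr 1
    rw [MeasureTheory.Measure.volume_eq_prod, lintegral_prod _ (by
      apply Measurable.aemeasurable
      apply Measurable.mul (f := fun p : ℝ × ℝ => ENNReal.ofReal (φ (p.1 + p.2 - ω₁)))
        (g := fun p : ℝ × ℝ => ENNReal.ofReal (φ p.1))
      · exact (ENNReal.measurable_ofReal.comp (hφ_cont.comp
          ((continuous_fst.add continuous_snd).sub continuous_const)).measurable)
      · exact (ENNReal.measurable_ofReal.comp (hφ_cont.comp continuous_fst).measurable))]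
    have inner : ∀ x : ℝ, (∫⁻ y : ℝ, ENNReal.ofReal (φ (x + y - ω₁)) * ENNReal.ofReal (φ x))
        = ENNReal.ofReal (φ x) * A := by
      intro x
      rw [lintegral_mul_const _ (show Measurable fun y : ℝ => ENNReal.ofReal (φ (x + y - ω₁)) from
        ((hφ_cont.comp (((continuous_const.add continuous_id).sub continuous_const) :
          Continuous fun y : ℝ => x + y - ω₁)).measurable).ennreal_ofReal)]
      rw [mul_comm]
      congr 1
      have : (fun y : ℝ => ENNReal.ofReal (φ (x + y - ω₁))) =
          fun y : ℝ => ENNReal.ofReal (φ (y + (x - ω₁))) := by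
        funext y; congr 1; ring_nf
      rw [this]
      exact lintegral_add_right_eq_self (fun y => ENNReal.ofReal (φ y)) (x - ω₁)
    simp only
    calc ∫⁻ x : ℝ, ∫⁻ y : ℝ, ENNReal.ofReal (φ (x + y - ω₁)) * ENNReal.ofReal (φ x)
        = ∫⁻ x : ℝ, ENNReal.ofReal (φ x) * A := by
          congr 1; funext x; exact inner x
      _ = A * A := by
          rw [lintegral_mul_const _ (show Measurable fun x : ℝ => ENNReal.ofReal (φ x) from
            hφ_cont.measurable.ennreal_ofReal)]
  have hJup : J ≤ ENNReal.ofReal K * (A * A) := by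
    calc J ≤ ∫⁻ p in Dom ω₁, ENNReal.ofReal (G p) := by
          rw [hJ_def]
          exact setLIntegral_mono (ENNReal.measurable_ofReal.comp hGcont.measurable)
            fun p hp => ENNReal.ofReal_le_ofReal (hFG p hp)
      _ ≤ ∫⁻ p : ℝ × ℝ, ENNReal.ofReal (G p) := setLIntegral_le_lintegral _ _
      _ = ENNReal.ofReal K * (A * A) := hGlint
  have hRHS_top : ENNReal.ofReal K * (A * A) < ⊤ :=
    ENNReal.mul_lt_top ENNReal.ofReal_lt_top (ENNReal.mul_lt_top hA_top hA_top)
  have hJ_top : J ≠ ⊤ := (lt_of_le_of_lt hJup hRHS_top).ne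
  have hIntUp : ∫ p in Dom ω₁, F p ≤ K * A.toReal ^ 2 := by
    rw [hInt_eq]
    calc J.toReal ≤ (ENNReal.ofReal K * (A * A)).toReal :=
          ENNReal.toReal_mono hRHS_top.ne hJup
      _ = K * A.toReal ^ 2 := by
          rw [ENNReal.toReal_mul, ENNReal.toReal_mul, ENNReal.toReal_ofReal hK.le]
          ring
  ----------------------------------------------------------------
  -- LOWER BOUND
  ----------------------------------------------------------------
  set R : Set (ℝ × ℝ) := Set.Icc (1/2 : ℝ) 1 ×ˢ Set.Icc ω₁ (ω₁ + 1) with hR_def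
  have hRsub : R ⊆ Dom ω₁ := by
    rintro ⟨x, y⟩ ⟨⟨hx1, hx2⟩, ⟨hy1, hy2⟩⟩
    exact ⟨by linarith, by linarith, by linarith⟩
  have hRvol : volume R = ENNReal.ofReal (1/2) := by
    rw [hR_def, MeasureTheory.Measure.volume_eq_prod, Measure.prod_prod, Real.volume_Icc,
      Real.volume_Icc]
    rw [show ω₁ + 1 - ω₁ = (1:ℝ) by ring, ENNReal.ofReal_one, mul_one]
    norm_num
  have hlow : ∀ p ∈ R, E * E * E / 8 * ω₁ ^ (β - M / 2) ≤ F p := by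
    rintro ⟨x, y⟩ ⟨⟨hx1, hx2⟩, ⟨hy1, hy2⟩⟩
    simp only at hx1 hx2 hy1 hy2
    have hw1 : 1/2 ≤ x + y - ω₁ := by linarith
    have hw2 : x + y - ω₁ ≤ 2 := by linarith
    set w : ℝ := x + y - ω₁ with hw_def
    have hx0 : (0:ℝ) < x := by linarith
    have hy0 : (0:ℝ) < y := by linarith
    have hw0 : (0:ℝ) < w := by linarith
    have l1 : ω₁ ^ β / 4 ≤ (w * x * y) ^ β := by
      have hwxy : ω₁ / 4 ≤ w * x * y := by
        have m1 : (1/2:ℝ) * ω₁ ≤ x * y := mul_le_mul hx1 hy1 hω0.le (by linarith)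
        have m2 : (1/2:ℝ) * ((1/2) * ω₁) ≤ w * (x * y) :=
          mul_le_mul hw1 m1 (by positivity) (by linarith)
        calc ω₁ / 4 = (1/2:ℝ) * ((1/2) * ω₁) := by ring
          _ ≤ w * (x * y) := m2
          _ = w * x * y := by ring
      have r1 : (ω₁ / 4) ^ β ≤ (w * x * y) ^ β :=
        Real.rpow_le_rpow (by positivity) hwxy hβ0
      have r2 : (ω₁ / 4) ^ β = ω₁ ^ β / 4 ^ β :=
        Real.div_rpow hω0.le (by norm_num : (0:ℝ) ≤ 4) β
      have r3 : (4:ℝ) ^ β ≤ 4 := by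
        calc (4:ℝ) ^ β ≤ 4 ^ (1:ℝ) :=
            Real.rpow_le_rpow_of_exponent_le (by norm_num) hβ1
          _ = 4 := Real.rpow_one 4
      have h4b : (0:ℝ) < 4 ^ β := Real.rpow_pos_of_pos (by norm_num) β
      have r4 : ω₁ ^ β / 4 ≤ ω₁ ^ β / 4 ^ β := by
        rw [div_le_div_iff₀ (by norm_num) h4b]
        exact mul_le_mul_of_nonneg_left r3 (Real.rpow_nonneg hω0.le β)
      linarith [r2 ▸ r1]
    have half_le_sqrt : ∀ u : ℝ, 1/4 ≤ u → (1:ℝ)/2 ≤ Real.sqrt u := by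
      intro u hu
      rw [show (1:ℝ)/2 = Real.sqrt (1/4) by
        rw [show (1:ℝ)/4 = (1/2)^2 by norm_num, Real.sqrt_sq (by norm_num)]]
      exact Real.sqrt_le_sqrt hu
    have l2 : 1/2 ≤ crossMin ω₁ (x, y) := by
      refine le_min (half_le_sqrt _ (by linarith)) (le_min ?_ (half_le_sqrt _ (by linarith)))
      exact half_le_sqrt _ (by simp only; linarith)
    have l3 : E ≤ n01 M w := by
      have hjb : jb w ≤ Real.sqrt 5 := by
        rw [jb]; exact Real.sqrt_le_sqrt (by nlinarith)
      exact Real.rpow_le_rpow_of_nonpos (jb_pos w) hjb (by linarith)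
    have l4 : E ≤ n01 M x := by
      have hjb : jb x ≤ Real.sqrt 5 := by
        rw [jb]; exact Real.sqrt_le_sqrt (by nlinarith)
      exact Real.rpow_le_rpow_of_nonpos (jb_pos x) hjb (by linarith)
    have l5 : E * ω₁ ^ (-(M / 2)) ≤ n01 M y := by
      have hy4 : y ≤ 2 * ω₁ := by linarith
      have hjb : jb y ≤ Real.sqrt 5 * ω₁ := by
        rw [jb, show Real.sqrt 5 * ω₁ = Real.sqrt (5 * ω₁ ^ 2) by
          rw [Real.sqrt_mul (by norm_num), Real.sqrt_sq hω0.le]]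
        exact Real.sqrt_le_sqrt (by nlinarith)
      have hmono := Real.rpow_le_rpow_of_nonpos (jb_pos y) hjb (by linarith : -(M/2) ≤ 0)
      calc E * ω₁ ^ (-(M / 2)) = (Real.sqrt 5 * ω₁) ^ (-(M / 2)) := by
            rw [Real.mul_rpow (Real.sqrt_nonneg 5) hω0.le]
        _ ≤ jb y ^ (-(M / 2)) := hmono
        _ = n01 M y := rfl
    have hFval : F (x, y) = (w * x * y) ^ β * crossMin ω₁ (x, y) *
        (n01 M w * n01 M x * n01 M y) := by rw [hF_def]
    rw [hFval]
    have prod3 : E * E * (E * ω₁ ^ (-(M / 2))) ≤ n01 M w * n01 M x * n01 M y := by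
      apply mul_le_mul (mul_le_mul l3 l4 hE.le (n01_pos M w).le) l5
        (mul_nonneg hE.le (Real.rpow_nonneg hω0.le _))
        (mul_nonneg (n01_pos M w).le (n01_pos M x).le)
    have base_nn : (0:ℝ) ≤ (w * x * y) ^ β :=
      Real.rpow_nonneg (by positivity) β
    have final : ω₁ ^ β / 4 * (1/2) * (E * E * (E * ω₁ ^ (-(M / 2)))) ≤
        (w * x * y) ^ β * crossMin ω₁ (x, y) * (n01 M w * n01 M x * n01 M y) := by
      apply mul_le_mul _ prod3
        (mul_nonneg (mul_nonneg hE.le hE.le)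
          (mul_nonneg hE.le (Real.rpow_nonneg hω0.le _)))
        (mul_nonneg base_nn (hcm_nonneg _))
      exact mul_le_mul l1 l2 (by norm_num) base_nn
    calc E * E * E / 8 * ω₁ ^ (β - M / 2)
        = ω₁ ^ β / 4 * (1/2) * (E * E * (E * ω₁ ^ (-(M / 2)))) := by
          rw [show β - M / 2 = β + -(M / 2) by ring, Real.rpow_add hω0]
          ring
      _ ≤ _ := final
  have hJlow : ENNReal.ofReal (E * E * E / 8 * ω₁ ^ (β - M / 2)) * ENNReal.ofReal (1/2) ≤ J := by
    calc ENNReal.ofReal (E * E * E / 8 * ω₁ ^ (β - M / 2)) * ENNReal.ofReal (1/2)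
        = ∫⁻ _ in R, ENNReal.ofReal (E * E * E / 8 * ω₁ ^ (β - M / 2)) := by
          rw [setLIntegral_const, hRvol]
      _ ≤ ∫⁻ p in R, ENNReal.ofReal (F p) :=
          setLIntegral_mono (ENNReal.measurable_ofReal.comp hFcont.measurable)
            fun p hp => ENNReal.ofReal_le_ofReal (hlow p hp)
      _ ≤ J := by rw [hJ_def]; exact lintegral_mono_set hRsub
  have hIntLow : E * E * E / 16 * ω₁ ^ (β - M / 2) ≤ ∫ p in Dom ω₁, F p := by
    rw [hInt_eq]
    have h1 : (ENNReal.ofReal (E * E * E / 8 * ω₁ ^ (β - M / 2)) *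
        ENNReal.ofReal (1/2)).toReal ≤ J.toReal :=
      ENNReal.toReal_mono hJ_top hJlow
    have h2 : (ENNReal.ofReal (E * E * E / 8 * ω₁ ^ (β - M / 2)) *
        ENNReal.ofReal (1/2)).toReal = E * E * E / 16 * ω₁ ^ (β - M / 2) := by
      rw [ENNReal.toReal_mul, ENNReal.toReal_ofReal (by positivity),
        ENNReal.toReal_ofReal (by norm_num)]
      ring
    linarith
  ----------------------------------------------------------------
  -- conclusion
  ----------------------------------------------------------------
  have hpow : ω₁ ^ (β - 1/2) * ω₁ ^ (β - M / 2) = ω₁ ^ (2 * β - 1/2 - M / 2) := by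
    rw [← Real.rpow_add hω0]
    congr 1; ring
  have hπ : (0:ℝ) < 64 * π ^ 3 := by positivity
  have hωp : (0:ℝ) < ω₁ ^ (β - 1/2) := Real.rpow_pos_of_pos hω0 _
  constructor
  · -- lower
    rw [hC234]
    calc 64 * π ^ 3 * (E * E * E / 16) * ω₁ ^ (2 * β - 1/2 - M / 2)
        = 64 * π ^ 3 * ω₁ ^ (β - 1/2) * (E * E * E / 16 * ω₁ ^ (β - M / 2)) := by
          rw [← hpow]; ring
      _ ≤ 64 * π ^ 3 * ω₁ ^ (β - 1/2) * ∫ p in Dom ω₁, F p := by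
          apply mul_le_mul_of_nonneg_left hIntLow (by positivity)
  · -- upper
    rw [hC234]
    calc 64 * π ^ 3 * ω₁ ^ (β - 1/2) * ∫ p in Dom ω₁, F p
        ≤ 64 * π ^ 3 * ω₁ ^ (β - 1/2) * (K * A.toReal ^ 2) := by
          apply mul_le_mul_of_nonneg_left hIntUp (by positivity)
      _ = 64 * π ^ 3 * 2 ^ (M / 2 - β) * A.toReal ^ 2 * ω₁ ^ (2 * β - 1/2 - M / 2) := by
          rw [hK_def, ← hpow]; ring
      _ ≤ 64 * π ^ 3 * 2 ^ (M / 2 - β) * (A.toReal ^ 2 + 1) * ω₁ ^ (2 * β - 1/2 - M / 2) := by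
          have hωe : (0:ℝ) ≤ ω₁ ^ (2 * β - 1/2 - M / 2) :=
            (Real.rpow_pos_of_pos hω0 _).le
          apply mul_le_mul_of_nonneg_right _ hωe
          apply mul_le_mul_of_nonneg_left (by linarith) (by positivity)
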